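/- For any n×n complex matrix X and any unit complex number w, the identity wⁿ · det((1/2)(w̄ X + w X*) − I) = det((1/2)(X + w² X*) − w I) holds; consequently, the map w ↦ det((1/2)(X + w² X*) − w I) is (the restriction to the unit circle of) a polynomial in w of degree at most 2n, and so if (1/2)(w̄X + wX*) − I is singular for 2n+1 distinct unit complex numbers w, then it is singular for all unit complex numbers w. -/

import Mathlib

open Matrix Polynomial

/-- The Hermitian part `Φ(A) = (A + A*)/2`. -/
noncomputable def hermPart {n : ℕ} (A : Matrix (Fin n) (Fin n) ℂ) :
    Matrix (Fin n) (Fin n) ℂ :=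
  (1 / 2 : ℂ) • (A + Aᴴ)

private lemma key_identity {n : ℕ} (X : Matrix (Fin n) (Fin n) ℂ) (w : ℂ) (hw : ‖w‖ = 1) :
    w ^ n * (hermPart ((starRingEnd ℂ w) • X) - 1).det
      = ((1 / 2 : ℂ) • (X + w ^ 2 • Xᴴ) - w • (1 : Matrix (Fin n) (Fin n) ℂ)).det := by
  have hmc : w * (starRingEnd ℂ w) = 1 := by
    rw [Complex.mul_conj']
    norm_cast
    simp [Complex.normSq_eq_norm_sq, hw]
  have h : (1 / 2 : ℂ) • (X + w ^ 2 • Xᴴ) - w • (1 : Matrix (Fin n) (Fin n) ℂ)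
      = w • (hermPart ((starRingEnd ℂ w) • X) - 1) := by
    ext i j
    simp only [hermPart, conjTranspose_smul, Matrix.smul_apply, Matrix.sub_apply,
      Matrix.add_apply, smul_eq_mul, conjTranspose_apply]
    have hs : star (starRingEnd ℂ w) = w := by simp
    rw [hs]
    linear_combination (-(X i j) / 2) * hmc
  rw [h, Matrix.det_smul, Fintype.card_fin]

private noncomputable def polyMat {n : ℕ} (X : Matrix (Fin n) (Fin n) ℂ) :
    Matrix (Fin n) (Fin n) (Polynomial ℂ) :=
  Matrix.of fun i j =>
    C ((1 / 2 : ℂ) * X i j) + C ((1 / 2 : ℂ) * Xᴴ i j) * Polynomial.X ^ 2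
      - C ((1 : Matrix (Fin n) (Fin n) ℂ) i j) * Polynomial.X

private lemma polyMat_natDegree_le {n : ℕ} (X : Matrix (Fin n) (Fin n) ℂ) (i j : Fin n) :
    ((polyMat X) i j).natDegree ≤ 2 := by
  unfold polyMat
  simp only [Matrix.of_apply]
  compute_degree

private lemma polyMat_eval {n : ℕ} (X : Matrix (Fin n) (Fin n) ℂ) (w : ℂ) :
    ((polyMat X).det).eval w
      = ((1 / 2 : ℂ) • (X + w ^ 2 • Xᴴ) - w • (1 : Matrix (Fin n) (Fin n) ℂ)).det := by
  have h := RingHom.map_det (Polynomial.evalRingHom w) (polyMat X)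
  rw [Polynomial.coe_evalRingHom] at h
  rw [show (Polynomial.eval w) (polyMat X).det = Polynomial.eval w (polyMat X).det from rfl, h]
  congr 1
  ext i j
  simp [polyMat, Matrix.map_apply, Matrix.smul_apply, Matrix.sub_apply, Matrix.add_apply]
  ring

private lemma polyMat_det_natDegree_le {n : ℕ} (X : Matrix (Fin n) (Fin n) ℂ) :
    ((polyMat X).det).natDegree ≤ 2 * n := by
  classical
  rw [Matrix.det_apply]
  refine le_trans (Polynomial.natDegree_sum_le _ _) ?_
  rw [Finset.fold_max_le]
  refine ⟨Nat.zero_le _, fun σ _ => ?_⟩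
  rw [Function.comp_apply, Units.smul_def, zsmul_eq_mul]
  refine le_trans (Polynomial.natDegree_mul_le) ?_
  rw [Polynomial.natDegree_intCast, zero_add]
  refine le_trans (Polynomial.natDegree_prod_le _ _) ?_
  calc ∑ i, ((polyMat X) (σ i) i).natDegree ≤ ∑ _i : Fin n, 2 :=
        Finset.sum_le_sum fun i _ => polyMat_natDegree_le X _ _
    _ = 2 * n := by simp [mul_comm]

theorem det_identity_and_polynomial {n : ℕ} (X : Matrix (Fin n) (Fin n) ℂ) :
    (∀ w : ℂ, ‖w‖ = 1 →
      w ^ n * (hermPart ((starRingEnd ℂ w) • X) - 1).det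
        = ((1 / 2 : ℂ) • (X + w ^ 2 • Xᴴ) - w • (1 : Matrix (Fin n) (Fin n) ℂ)).det) ∧
    (∃ p : Polynomial ℂ, p.degree ≤ (2 * n : ℕ) ∧ ∀ w : ℂ,
      p.eval w
        = ((1 / 2 : ℂ) • (X + w ^ 2 • Xᴴ) - w • (1 : Matrix (Fin n) (Fin n) ℂ)).det) ∧
    (∀ S : Finset ℂ, (∀ w ∈ S, ‖w‖ = 1) → 2 * n + 1 ≤ S.card →
      (∀ w ∈ S, (hermPart ((starRingEnd ℂ w) • X) - 1).det = 0) →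
      ∀ w : ℂ, ‖w‖ = 1 → (hermPart ((starRingEnd ℂ w) • X) - 1).det = 0) := by
  refine ⟨fun w hw => key_identity X w hw,
    ⟨(polyMat X).det,
      le_trans Polynomial.degree_le_natDegree
        (by exact_mod_cast polyMat_det_natDegree_le X), polyMat_eval X⟩, ?_⟩
  intro S hS hcard hzero w hw
  have hp0 : (polyMat X).det = 0 := by
    refine Polynomial.eq_zero_of_natDegree_lt_card_of_eval_eq_zero' _ S (fun v hv => ?_) ?_
    · rw [polyMat_eval, ← key_identity X v (hS v hv), hzero v hv, mul_zero]
    · have := polyMat_det_natDegree_le X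
      omega
  have h1 := key_identity X w hw
  rw [← polyMat_eval, hp0, Polynomial.eval_zero] at h1
  have hwne : w ≠ 0 := by
    intro h; rw [h] at hw; simp at hw
  exact (mul_eq_zero.mp h1).resolve_left (pow_ne_zero n hwne)
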